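/- Let C be a finitary extensive category with finite limits whose full subcategory Dec(C) of decidable objects is reflective, with reflector L : C → Dec(C). Then L preserves finite products if and only if L preserves pullbacks over decidable objects. -/

import Mathlib

open CategoryTheory CategoryTheory.Limits

/-- A morphism `i : X ⟶ Z` is a (binary coproduct) summand if there is a morphism
`j : Y ⟶ Z` such that the cospan `X ⟶ Z ⟵ Y` is a coproduct cocone. -/
def IsSummand {C : Type*} [Category C] {X Z : C} (i : X ⟶ Z) : Prop :=
  ∃ (Y : C) (j : Y ⟶ Z), Nonempty (IsColimit (BinaryCofan.mk i j))

/-- An object `X` is decidable if its diagonal `X ⟶ X ⨯ X` is a coproduct summand. -/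
noncomputable def IsDecidableObj {C : Type*} [Category C] [HasBinaryProducts C] (X : C) : Prop :=
  IsSummand (diag X)

section Aux

variable {C : Type*} [Category C]

theorem isSummand_of_isColimit {X Y Z : C} {i : X ⟶ Z} {j : Y ⟶ Z}
    (h : IsColimit (BinaryCofan.mk i j)) : IsSummand i := ⟨Y, j, ⟨h⟩⟩

theorem isSummand_of_isColimit' {X Y Z : C} {i : X ⟶ Z} {j : Y ⟶ Z}
    (h : IsColimit (BinaryCofan.mk i j)) : IsSummand j :=
  ⟨X, i, ⟨BinaryCofan.isColimitFlip h⟩⟩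

theorem cofan_inl_desc {X Y Z : C} {i : X ⟶ Z} {j : Y ⟶ Z} (hc : IsColimit (BinaryCofan.mk i j))
    {T : C} (f : X ⟶ T) (g : Y ⟶ T) : i ≫ hc.desc (BinaryCofan.mk f g) = f := by
  exact hc.fac (BinaryCofan.mk f g) ⟨WalkingPair.left⟩

theorem cofan_inr_desc {X Y Z : C} {i : X ⟶ Z} {j : Y ⟶ Z} (hc : IsColimit (BinaryCofan.mk i j))
    {T : C} (f : X ⟶ T) (g : Y ⟶ T) : j ≫ hc.desc (BinaryCofan.mk f g) = g := by
  exact hc.fac (BinaryCofan.mk f g) ⟨WalkingPair.right⟩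

theorem cofan_uniq {X Y Z : C} {i : X ⟶ Z} {j : Y ⟶ Z} (hc : IsColimit (BinaryCofan.mk i j))
    {T : C} {f : X ⟶ T} {g : Y ⟶ T} {m : Z ⟶ T}
    (h1 : i ≫ m = f) (h2 : j ≫ m = g) : m = hc.desc (BinaryCofan.mk f g) :=
  hc.uniq (BinaryCofan.mk f g) m (by rintro ⟨⟨⟩⟩ <;> simpa)

theorem cofan_hom_ext {X Y Z : C} {i : X ⟶ Z} {j : Y ⟶ Z} (hc : IsColimit (BinaryCofan.mk i j))
    {T : C} {m m' : Z ⟶ T} (h1 : i ≫ m = i ≫ m') (h2 : j ≫ m = j ≫ m') : m = m' :=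
  BinaryCofan.IsColimit.hom_ext hc h1 h2

/-- An isomorphism is a summand (with complement the initial object). -/
theorem isSummand_of_isIso [HasInitial C] {X Z : C} (i : X ⟶ Z) [IsIso i] : IsSummand i := by
  refine ⟨⊥_ C, initial.to Z, ⟨BinaryCofan.isColimitMk (fun s => inv i ≫ s.inl)
    (fun s => by exact IsIso.hom_inv_id_assoc i s.inl) (fun s => initial.hom_ext _ _) (fun s m h1 h2 => ?_)⟩⟩
  show m = inv i ≫ s.inl
  rw [← h1, ← Category.assoc, IsIso.inv_hom_id, Category.id_comp]

/-- Summands are closed under composition. -/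
theorem IsSummand.comp [HasBinaryCoproducts C] {A T Z : C} {i : A ⟶ T} {t : T ⟶ Z}
    (hi : IsSummand i) (ht : IsSummand t) : IsSummand (i ≫ t) := by
  obtain ⟨B, j, ⟨hij⟩⟩ := hi
  obtain ⟨U, u, ⟨htu⟩⟩ := ht
  refine ⟨B ⨿ U, coprod.desc (j ≫ t) u, ⟨BinaryCofan.isColimitMk
    (fun s => htu.desc (BinaryCofan.mk
      (hij.desc (BinaryCofan.mk s.inl (coprod.inl ≫ s.inr)))
      (coprod.inr ≫ s.inr))) ?_ ?_ ?_⟩⟩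
  · intro s
    erw [Category.assoc, cofan_inl_desc htu, cofan_inl_desc hij]
  · intro s
    apply coprod.hom_ext
    · erw [coprod.inl_desc_assoc, Category.assoc, cofan_inl_desc htu, cofan_inr_desc hij]
    · erw [coprod.inr_desc_assoc, cofan_inr_desc htu]; rfl
  · intro s m h1 h2
    have hm1 : (j ≫ t) ≫ m = coprod.inl ≫ s.inr := by
      rw [← coprod.inl_desc (j ≫ t) u, Category.assoc, h2]
    have hm2 : u ≫ m = coprod.inr ≫ s.inr := by
      rw [← coprod.inr_desc (j ≫ t) u, Category.assoc, h2]
    exact cofan_uniq htu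
      (cofan_uniq hij (by rw [← Category.assoc]; exact h1)
        (by rw [← Category.assoc]; exact hm1)) hm2

variable [HasBinaryProducts C]

theorem isPullback_prodMap_fst {A Z : C} (i : A ⟶ Z) (W : C) :
    IsPullback (prod.map i (𝟙 W)) prod.fst prod.fst i := by
  refine IsPullback.of_isLimit' ⟨by simp⟩ ?_
  refine PullbackCone.IsLimit.mk _ (fun s => prod.lift s.snd (s.fst ≫ prod.snd)) ?_ ?_ ?_
  · intro s
    apply Limits.prod.hom_ext
    · simpa [prod.lift_fst] using s.condition.symm
    · simp [prod.lift_snd]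
  · intro s; simp [prod.lift_fst]
  · intro s m h1 h2
    apply Limits.prod.hom_ext
    · simpa [prod.lift_fst] using h2
    · have := congrArg (fun q => q ≫ (prod.snd : Z ⨯ W ⟶ W)) h1
      simpa [prod.lift_snd] using this

theorem isPullback_prodMap_snd {A Z : C} (i : A ⟶ Z) (W : C) :
    IsPullback (prod.map (𝟙 W) i) prod.snd prod.snd i := by
  refine IsPullback.of_isLimit' ⟨by simp⟩ ?_
  refine PullbackCone.IsLimit.mk _ (fun s => prod.lift (s.fst ≫ prod.fst) s.snd) ?_ ?_ ?_
  · intro s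
    apply Limits.prod.hom_ext
    · simp [prod.lift_fst]
    · simpa [prod.lift_snd] using s.condition.symm
  · intro s; simp [prod.lift_snd]
  · intro s m h1 h2
    apply Limits.prod.hom_ext
    · have := congrArg (fun q => q ≫ (prod.fst : W ⨯ Z ⟶ W)) h1
      simpa [prod.lift_fst] using this
    · simpa [prod.lift_snd] using h2

variable [FinitaryExtensive C]

noncomputable def isColimit_prodMap_fst {A B Z : C} {u : A ⟶ Z} {v : B ⟶ Z}
    (hc : IsColimit (BinaryCofan.mk u v)) (W : C) :
    IsColimit (BinaryCofan.mk (prod.map u (𝟙 W)) (prod.map v (𝟙 W))) :=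
  (((BinaryCofan.isVanKampen_iff _).mp (FinitaryExtensive.vanKampen _ hc)
    (BinaryCofan.mk (prod.map u (𝟙 W)) (prod.map v (𝟙 W))) prod.fst prod.fst
    prod.fst (prod.map_fst _ _).symm (prod.map_fst _ _).symm).mpr
    ⟨isPullback_prodMap_fst u W, isPullback_prodMap_fst v W⟩).some

noncomputable def isColimit_prodMap_snd {A B Z : C} {u : A ⟶ Z} {v : B ⟶ Z}
    (hc : IsColimit (BinaryCofan.mk u v)) (W : C) :
    IsColimit (BinaryCofan.mk (prod.map (𝟙 W) u) (prod.map (𝟙 W) v)) :=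
  (((BinaryCofan.isVanKampen_iff _).mp (FinitaryExtensive.vanKampen _ hc)
    (BinaryCofan.mk (prod.map (𝟙 W) u) (prod.map (𝟙 W) v)) prod.snd prod.snd
    prod.snd (prod.map_snd _ _).symm (prod.map_snd _ _).symm).mpr
    ⟨isPullback_prodMap_snd u W, isPullback_prodMap_snd v W⟩).some

theorem IsSummand.prodMap_fst {A Z : C} {i : A ⟶ Z} (hi : IsSummand i) (W : C) :
    IsSummand (prod.map i (𝟙 W)) := by
  obtain ⟨B, j, ⟨hc⟩⟩ := hi
  exact isSummand_of_isColimit (isColimit_prodMap_fst hc W)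

theorem IsSummand.prodMap_snd {A Z : C} {i : A ⟶ Z} (hi : IsSummand i) (W : C) :
    IsSummand (prod.map (𝟙 W) i) := by
  obtain ⟨B, j, ⟨hc⟩⟩ := hi
  exact isSummand_of_isColimit (isColimit_prodMap_snd hc W)

/-- "Coproduct of summands is a summand": given `Z = A₁ ⨿ A₂`, `T = W₁ ⨿ W₂`, a summand
`i₁ : A₁ ⟶ W₁` and a summand `i₂ : A₂ ⟶ W₂`, the induced map `d : Z ⟶ T` is a summand. -/
theorem isSummand_desc {A₁ A₂ W₁ W₂ T Z : C}
    {i₁ : A₁ ⟶ W₁} {i₂ : A₂ ⟶ W₂} {q₁ : W₁ ⟶ T} {q₂ : W₂ ⟶ T} {u : A₁ ⟶ Z} {v : A₂ ⟶ Z}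
    (hZ : IsColimit (BinaryCofan.mk u v)) (h₁ : IsSummand i₁) (h₂ : IsSummand i₂)
    (hT : IsColimit (BinaryCofan.mk q₁ q₂)) {d : Z ⟶ T}
    (hd₁ : u ≫ d = i₁ ≫ q₁) (hd₂ : v ≫ d = i₂ ≫ q₂) : IsSummand d := by
  obtain ⟨B₁, j₁, ⟨hc₁⟩⟩ := h₁
  obtain ⟨B₂, j₂, ⟨hc₂⟩⟩ := h₂
  refine ⟨B₁ ⨿ B₂, coprod.desc (j₁ ≫ q₁) (j₂ ≫ q₂), ⟨BinaryCofan.isColimitMk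
    (fun s => hT.desc (BinaryCofan.mk
      (hc₁.desc (BinaryCofan.mk (u ≫ s.inl) (coprod.inl ≫ s.inr)))
      (hc₂.desc (BinaryCofan.mk (v ≫ s.inl) (coprod.inr ≫ s.inr))))) ?_ ?_ ?_⟩⟩
  · intro s
    apply cofan_hom_ext hZ
    · erw [← Category.assoc, hd₁, Category.assoc, cofan_inl_desc hT, cofan_inl_desc hc₁]
    · erw [← Category.assoc, hd₂, Category.assoc, cofan_inr_desc hT, cofan_inl_desc hc₂]
  · intro s
    apply coprod.hom_ext
    · erw [coprod.inl_desc_assoc, Category.assoc, cofan_inl_desc hT, cofan_inr_desc hc₁]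
    · erw [coprod.inr_desc_assoc, Category.assoc, cofan_inr_desc hT, cofan_inr_desc hc₂]
  · intro s m h1 h2
    have hm1 : (j₁ ≫ q₁) ≫ m = coprod.inl ≫ s.inr := by
      rw [← coprod.inl_desc (j₁ ≫ q₁) (j₂ ≫ q₂), Category.assoc, h2]
    have hm2 : (j₂ ≫ q₂) ≫ m = coprod.inr ≫ s.inr := by
      rw [← coprod.inr_desc (j₁ ≫ q₁) (j₂ ≫ q₂), Category.assoc, h2]
    refine cofan_uniq hT ?_ ?_
    · refine cofan_uniq hc₁ ?_ ?_
      · rw [← Category.assoc, ← hd₁, Category.assoc, h1]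
      · rw [← Category.assoc]; exact hm1
    · refine cofan_uniq hc₂ ?_ ?_
      · rw [← Category.assoc, ← hd₂, Category.assoc, h1]
      · rw [← Category.assoc]; exact hm2

/-- Decidable objects are closed under binary coproducts. -/
theorem isDecidableObj_of_isColimit {A B Z : C} {u : A ⟶ Z} {v : B ⟶ Z}
    (hc : IsColimit (BinaryCofan.mk u v)) (hA : IsDecidableObj A) (hB : IsDecidableObj B) :
    IsDecidableObj Z := by
  have hu : IsSummand u := isSummand_of_isColimit hc
  have hv : IsSummand v := isSummand_of_isColimit' hc
  have hT := isColimit_prodMap_fst hc Z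
  have sA : IsSummand (diag A ≫ prod.map (𝟙 A) u : A ⟶ A ⨯ Z) := hA.comp (hu.prodMap_snd A)
  have sB : IsSummand (diag B ≫ prod.map (𝟙 B) v : B ⟶ B ⨯ Z) := hB.comp (hv.prodMap_snd B)
  refine isSummand_desc hc sA sB hT ?_ ?_
  · apply Limits.prod.hom_ext <;> simp
  · apply Limits.prod.hom_ext <;> simp

theorem fan_lift_fst {X Y Z : C} {pX : Z ⟶ X} {pY : Z ⟶ Y} (hc : IsLimit (BinaryFan.mk pX pY))
    {T : C} (f : T ⟶ X) (g : T ⟶ Y) : hc.lift (BinaryFan.mk f g) ≫ pX = f := by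
  simpa using hc.fac (BinaryFan.mk f g) ⟨WalkingPair.left⟩

theorem fan_lift_snd {X Y Z : C} {pX : Z ⟶ X} {pY : Z ⟶ Y} (hc : IsLimit (BinaryFan.mk pX pY))
    {T : C} (f : T ⟶ X) (g : T ⟶ Y) : hc.lift (BinaryFan.mk f g) ≫ pY = g := by
  simpa using hc.fac (BinaryFan.mk f g) ⟨WalkingPair.right⟩

theorem fan_hom_ext {X Y Z : C} {pX : Z ⟶ X} {pY : Z ⟶ Y} (hc : IsLimit (BinaryFan.mk pX pY))
    {T : C} {m m' : T ⟶ Z} (h1 : m ≫ pX = m' ≫ pX) (h2 : m ≫ pY = m' ≫ pY) : m = m' :=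
  BinaryFan.IsLimit.hom_ext hc h1 h2

/-- Given two limit binary fans (products) and a "diagonal"-type pullback square, deduce the
plain pullback square. -/
theorem isPullback_of_diag {T X Y Z S P : C}
    {pX : T ⟶ X} {pY : T ⟶ Y} (hT : IsLimit (BinaryFan.mk pX pY))
    {qX qY : Z ⟶ S} (hZ : IsLimit (BinaryFan.mk qX qY))
    {g : X ⟶ S} {h : Y ⟶ S} {k : T ⟶ Z} (hkX : k ≫ qX = pX ≫ g) (hkY : k ≫ qY = pY ≫ h)
    {δ : S ⟶ Z} (hδX : δ ≫ qX = 𝟙 S) (hδY : δ ≫ qY = 𝟙 S)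
    {l : P ⟶ T} {c : P ⟶ S} (H : IsPullback l c k δ) :
    IsPullback (l ≫ pX) (l ≫ pY) g h := by
  have hcX : l ≫ pX ≫ g = c := by
    rw [← hkX, ← Category.assoc, H.w, Category.assoc, hδX, Category.comp_id]
  have hcY : l ≫ pY ≫ h = c := by
    rw [← hkY, ← Category.assoc, H.w, Category.assoc, hδY, Category.comp_id]
  have comm : (l ≫ pX) ≫ g = (l ≫ pY) ≫ h := by
    rw [Category.assoc, Category.assoc, hcX, hcY]
  refine IsPullback.of_isLimit' ⟨comm⟩ ?_
  refine PullbackCone.IsLimit.mk _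
    (fun s => H.lift (hT.lift (BinaryFan.mk s.fst s.snd)) (s.fst ≫ g)
      (fan_hom_ext hZ
        (by rw [Category.assoc, hkX, ← Category.assoc, fan_lift_fst hT, Category.assoc, hδX,
              Category.comp_id])
        (by rw [Category.assoc, hkY, ← Category.assoc, fan_lift_snd hT, Category.assoc, hδY,
              Category.comp_id]
            exact s.condition.symm))) ?_ ?_ ?_
  · intro s
    rw [← Category.assoc, IsPullback.lift_fst, fan_lift_fst hT]
  · intro s
    rw [← Category.assoc, IsPullback.lift_fst, fan_lift_snd hT]
  · intro s m h1 h2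
    apply H.hom_ext
    · rw [IsPullback.lift_fst]
      refine fan_hom_ext hT ?_ ?_
      · rw [Category.assoc, fan_lift_fst hT]; exact h1
      · rw [Category.assoc, fan_lift_snd hT]; exact h2
    · rw [IsPullback.lift_snd, ← hcX]
      rw [← Category.assoc] at h1
      rw [← Category.assoc, ← Category.assoc, h1]

end Aux

section Reflector

variable {C : Type*} [Category C] [FinitaryExtensive C] [HasFiniteLimits C]
variable (L : C ⥤ ObjectProperty.FullSubcategory (fun X : C => IsDecidableObj X))
variable (adj : L ⊣ ObjectProperty.ι (fun X : C => IsDecidableObj X))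

/-- The composite `C ⥤ Dec(C) ⥤ C` preserves binary coproduct cofans. -/
noncomputable def isColimit_map_binaryCofan {A B Z : C} {u : A ⟶ Z} {v : B ⟶ Z}
    (hc : IsColimit (BinaryCofan.mk u v)) :
    IsColimit (BinaryCofan.mk
      ((L ⋙ ObjectProperty.ι (fun X : C => IsDecidableObj X)).map u)
      ((L ⋙ ObjectProperty.ι (fun X : C => IsDecidableObj X)).map v)) := by
  haveI := adj.leftAdjoint_preservesColimits
  set ι := ObjectProperty.ι (fun X : C => IsDecidableObj X) with hι
  -- L preserves the coproduct
  have hDec : IsColimit (BinaryCofan.mk (L.map u) (L.map v)) :=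
    isColimitMapCoconeBinaryCofanEquiv L u v (isColimitOfPreserves L hc)
  -- the C-coproduct of the underlying objects is decidable
  have hR : IsDecidableObj ((ι.obj (L.obj A)) ⨿ (ι.obj (L.obj B))) :=
    isDecidableObj_of_isColimit (coprodIsCoprod _ _) (L.obj A).property (L.obj B).property
  -- the C-coproduct gives a colimit cofan in Dec(C)
  let R : ObjectProperty.FullSubcategory (fun X : C => IsDecidableObj X) := ⟨_, hR⟩
  let cD : BinaryCofan (L.obj A) (L.obj B) :=
    BinaryCofan.mk (show L.obj A ⟶ R from ObjectProperty.homMk coprod.inl)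
      (show L.obj B ⟶ R from ObjectProperty.homMk coprod.inr)
  have hcD : IsColimit cD := by
    apply isColimitOfReflects ι
    exact (isColimitMapCoconeBinaryCofanEquiv ι _ _).symm (coprodIsCoprod _ _)
  -- compare the two colimits in Dec(C)
  let e : L.obj Z ≅ R := hDec.coconePointUniqueUpToIso hcD
  have he₁ : L.map u ≫ e.hom = cD.inl :=
    hDec.comp_coconePointUniqueUpToIso_hom hcD ⟨WalkingPair.left⟩
  have he₂ : L.map v ≫ e.hom = cD.inr :=
    hDec.comp_coconePointUniqueUpToIso_hom hcD ⟨WalkingPair.right⟩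
  have hA : (L ⋙ ι).map u ≫ ι.map e.hom =
      (coprod.inl : ι.obj (L.obj A) ⟶ ι.obj (L.obj A) ⨿ ι.obj (L.obj B)) := by
    show ι.map (L.map u) ≫ ι.map e.hom = _
    rw [← ι.map_comp, he₁]; rfl
  have hB : (L ⋙ ι).map v ≫ ι.map e.hom =
      (coprod.inr : ι.obj (L.obj B) ⟶ ι.obj (L.obj A) ⨿ ι.obj (L.obj B)) := by
    show ι.map (L.map v) ≫ ι.map e.hom = _
    rw [← ι.map_comp, he₂]; rfl
  -- transport the C-coproduct along the iso
  refine BinaryCofan.isColimitMk (fun s => ι.map e.hom ≫ coprod.desc s.inl s.inr) ?_ ?_ ?_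
  · intro s
    erw [← Category.assoc, hA, coprod.inl_desc]
  · intro s
    erw [← Category.assoc, hB, coprod.inr_desc]
  · intro s m h1 h2
    have hinv : ι.map e.inv ≫ m = coprod.desc s.inl s.inr := by
      apply coprod.hom_ext
      · erw [coprod.inl_desc, ← hA, Category.assoc, ← ι.map_comp_assoc e.hom e.inv, e.hom_inv_id, ι.map_id,
          Category.id_comp]
        exact h1
      · erw [coprod.inr_desc, ← hB, Category.assoc, ← ι.map_comp_assoc e.hom e.inv, e.hom_inv_id, ι.map_id,
          Category.id_comp]
        exact h2
    have hm : m = ι.map e.hom ≫ ι.map e.inv ≫ m := by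
      rw [← Category.assoc, ← ι.map_comp, e.hom_inv_id, ι.map_id, Category.id_comp]
    rw [hm, hinv]
    rfl

end Reflector

/-- For a finitary extensive category `C` with finite limits whose full subcategory of
decidable objects is reflective with reflector `L`, the reflector preserves finite products
if and only if it preserves pullbacks over decidable objects. -/
theorem reflector_preservesFiniteProducts_iff_preserves_pullbacks_over_decidable
    {C : Type*} [Category C] [FinitaryExtensive C] [HasFiniteLimits C]
    (L : C ⥤ ObjectProperty.FullSubcategory (fun X : C => IsDecidableObj X))
    (adj : L ⊣ ObjectProperty.ι (fun X : C => IsDecidableObj X)) :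
    PreservesFiniteProducts L ↔
      (∀ {P X Y S : C} (fst : P ⟶ X) (snd : P ⟶ Y) (g : X ⟶ S) (h : Y ⟶ S),
        IsDecidableObj S → IsPullback fst snd g h →
          IsPullback (L.map fst) (L.map snd) (L.map g) (L.map h)) := by
  set ι := ObjectProperty.ι (fun X : C => IsDecidableObj X) with hι
  constructor
  · -- products ⇒ pullbacks over decidable objects
    intro inst P X Y S fst snd g h hS hPB
    obtain ⟨N, n, ⟨hn⟩⟩ := hS
    -- the canonical pullback square presenting `P` over the diagonal of `S`
    have sq1 : IsPullback (prod.lift fst snd) (fst ≫ g) (prod.map g h) (diag S) := by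
      refine IsPullback.of_isLimit' ⟨?_⟩ ?_
      · apply Limits.prod.hom_ext <;> simp [hPB.w]
      · refine PullbackCone.IsLimit.mk _ (fun s => hPB.lift (s.fst ≫ prod.fst)
          (s.fst ≫ prod.snd) ?_) ?_ ?_ ?_
        · have c1 := congrArg (fun q => q ≫ (prod.fst : S ⨯ S ⟶ S)) s.condition
          have c2 := congrArg (fun q => q ≫ (prod.snd : S ⨯ S ⟶ S)) s.condition
          simp only [Category.assoc, prod.map_fst, prod.map_snd] at c1 c2
          rw [show (diag S) ≫ prod.fst = 𝟙 S by simp [diag, prod.lift_fst, prod.lift_snd], Category.comp_id] at c1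
          rw [show (diag S) ≫ prod.snd = 𝟙 S by simp [diag, prod.lift_fst, prod.lift_snd], Category.comp_id] at c2
          simp only [Category.assoc]
          rw [c1, c2]
        · intro s
          apply Limits.prod.hom_ext
          · simp [hPB.lift_fst, prod.lift_fst]
          · simp [hPB.lift_snd, prod.lift_snd]
        · intro s
          have c1 := congrArg (fun q => q ≫ (prod.fst : S ⨯ S ⟶ S)) s.condition
          simp only [Category.assoc, prod.map_fst] at c1
          rw [show (diag S) ≫ prod.fst = 𝟙 S by simp [diag, prod.lift_fst, prod.lift_snd], Category.comp_id] at c1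
          rw [← Category.assoc, hPB.lift_fst, Category.assoc, c1]
        · intro s m h1 h2
          apply hPB.hom_ext
          · rw [hPB.lift_fst]
            have := congrArg (fun q => q ≫ (prod.fst : X ⨯ Y ⟶ X)) h1
            simpa [prod.lift_fst] using this
          · rw [hPB.lift_snd]
            have := congrArg (fun q => q ≫ (prod.snd : X ⨯ Y ⟶ Y)) h1
            simpa [prod.lift_snd] using this
    have sq2 := (IsPullback.of_hasPullback n (prod.map g h)).flip
    obtain ⟨hXY⟩ := ((BinaryCofan.isVanKampen_iff _).mp (FinitaryExtensive.vanKampen _ hn)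
        (BinaryCofan.mk (prod.lift fst snd) (pullback.snd n (prod.map g h)))
        (fst ≫ g) (pullback.fst n (prod.map g h)) (prod.map g h)
        sq1.w.symm pullback.condition).mpr ⟨sq1, sq2⟩
    have hC1 := isColimit_map_binaryCofan L adj hXY
    have hC2 := isColimit_map_binaryCofan L adj hn
    obtain ⟨key, -⟩ := ((BinaryCofan.isVanKampen_iff _).mp (FinitaryExtensive.vanKampen _ hC2)
        (BinaryCofan.mk ((L ⋙ ι).map (prod.lift fst snd))
          ((L ⋙ ι).map (pullback.snd n (prod.map g h))))
        ((L ⋙ ι).map (fst ≫ g)) ((L ⋙ ι).map (pullback.fst n (prod.map g h)))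
        ((L ⋙ ι).map (prod.map g h))
        (by simp only [BinaryCofan.mk_inl, BinaryCofan.mk_inr]
            erw [← Functor.map_comp, ← Functor.map_comp, sq1.w])
        (by simp only [BinaryCofan.mk_inl, BinaryCofan.mk_inr]
            erw [← Functor.map_comp, ← Functor.map_comp, pullback.condition])).mp ⟨hC1⟩
    simp only [BinaryCofan.mk_inl, BinaryCofan.mk_inr] at key
    haveI := adj.rightAdjoint_preservesLimits
    have fanXY : IsLimit (BinaryFan.mk ((L ⋙ ι).map (prod.fst : X ⨯ Y ⟶ X))
        ((L ⋙ ι).map (prod.snd : X ⨯ Y ⟶ Y))) := by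
      have h1 : IsLimit (BinaryFan.mk (L.map (prod.fst : X ⨯ Y ⟶ X)) (L.map prod.snd)) :=
        isLimitMapConeBinaryFanEquiv L _ _ (isLimitOfPreserves L (prodIsProd X Y))
      exact isLimitMapConeBinaryFanEquiv ι _ _ (isLimitOfPreserves ι h1)
    have fanSS : IsLimit (BinaryFan.mk ((L ⋙ ι).map (prod.fst : S ⨯ S ⟶ S))
        ((L ⋙ ι).map (prod.snd : S ⨯ S ⟶ S))) := by
      have h1 : IsLimit (BinaryFan.mk (L.map (prod.fst : S ⨯ S ⟶ S)) (L.map prod.snd)) :=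
        isLimitMapConeBinaryFanEquiv L _ _ (isLimitOfPreserves L (prodIsProd S S))
      exact isLimitMapConeBinaryFanEquiv ι _ _ (isLimitOfPreserves ι h1)
    have main := isPullback_of_diag fanXY fanSS
        (by rw [← Functor.map_comp, ← Functor.map_comp, prod.map_fst])
        (by rw [← Functor.map_comp, ← Functor.map_comp, prod.map_snd])
        (by rw [← Functor.map_comp, show diag S ≫ prod.fst = 𝟙 S by simp [diag, prod.lift_fst, prod.lift_snd]]
            exact (L ⋙ ι).map_id S)
        (by rw [← Functor.map_comp, show diag S ≫ prod.snd = 𝟙 S by simp [diag, prod.lift_fst, prod.lift_snd]]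
            exact (L ⋙ ι).map_id S)
        key
    have e1 : (L ⋙ ι).map (prod.lift fst snd) ≫ (L ⋙ ι).map (prod.fst : X ⨯ Y ⟶ X) =
        (L ⋙ ι).map fst := by rw [← Functor.map_comp, prod.lift_fst]
    have e2 : (L ⋙ ι).map (prod.lift fst snd) ≫ (L ⋙ ι).map (prod.snd : X ⨯ Y ⟶ Y) =
        (L ⋙ ι).map snd := by rw [← Functor.map_comp, prod.lift_snd]
    erw [e1, e2] at main
    exact IsPullback.of_map ι (by rw [← L.map_comp, ← L.map_comp, hPB.w]) main
  · -- pullbacks over decidable objects ⇒ products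
    intro H
    -- the terminal object is decidable
    have hIso : IsIso (diag (⊤_ C)) := by
      refine ⟨prod.fst, by simp [diag, prod.lift_fst], ?_⟩
      apply Limits.prod.hom_ext
      · simp [diag, prod.lift_fst]
      · simp only [Category.assoc, Category.id_comp]
        rw [show (diag (⊤_ C)) ≫ prod.snd = 𝟙 (⊤_ C) by simp [diag, prod.lift_snd]]
        rw [Category.comp_id]
        exact terminalIsTerminal.hom_ext _ _
    have h1 : IsDecidableObj (⊤_ C) := by
      have := hIso
      exact isSummand_of_isIso (diag (⊤_ C))
    -- the unit is invertible at the terminal object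
    let T0 : ObjectProperty.FullSubcategory (fun X : C => IsDecidableObj X) := ⟨⊤_ C, h1⟩
    have hη : adj.unit.app (⊤_ C) ≫ ι.map (adj.counit.app T0) = 𝟙 (⊤_ C) :=
      adj.right_triangle_components T0
    haveI : IsIso (ι.map (adj.counit.app T0)) := by
      haveI : IsIso (adj.counit.app T0) := inferInstance
      infer_instance
    haveI : IsIso (adj.unit.app (⊤_ C)) := by
      have ha : adj.unit.app (⊤_ C) = inv (ι.map (adj.counit.app T0)) := by
        apply (cancel_mono (ι.map (adj.counit.app T0))).mp
        rw [hη]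
        exact (IsIso.inv_hom_id _).symm
      rw [ha]
      infer_instance
    have hT0 : IsTerminal T0 := IsTerminal.ofUniqueHom
      (fun D => ObjectProperty.homMk (terminal.from D.obj : D.obj ⟶ ⊤_ C))
      (fun D m => ObjectProperty.hom_ext _ (terminalIsTerminal.hom_ext _ _))
    have hLT : IsTerminal (L.obj (⊤_ C)) := by
      refine hT0.ofIso (ι.preimageIso ?_)
      exact (asIso (adj.unit.app (⊤_ C)))
    haveI : PreservesLimit (Functor.empty.{0} C) L :=
      preservesLimit_of_preserves_limit_cone terminalIsTerminal
        ((isLimitMapConeEmptyConeEquiv L (⊤_ C)).symm hLT)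
    haveI : PreservesLimitsOfShape (Discrete PEmpty.{1}) L :=
      preservesLimitsOfShape_pempty_of_preservesTerminal L
    have hbin : ∀ A B : C, PreservesLimit (pair A B) L := by
      intro A B
      apply preservesLimit_of_preserves_limit_cone (prodIsProd A B)
      have hpb := H (prod.fst : A ⨯ B ⟶ A) (prod.snd : A ⨯ B ⟶ B)
        (terminal.from A) (terminal.from B) h1
        (IsPullback.of_isLimit (isPullbackOfIsTerminalIsProduct _ _ _ _ terminalIsTerminal
          (prodIsProd A B)))
      exact (isLimitMapConeBinaryFanEquiv L _ _).symm
        (isProductOfIsTerminalIsPullback (L.map (terminal.from A)) (L.map (terminal.from B))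
          _ _ hLT hpb.isLimit)
    haveI : PreservesLimitsOfShape (Discrete WalkingPair) L :=
      ⟨fun {K} => preservesLimit_of_iso_diagram L (diagramIsoPair K).symm⟩
    exact PreservesFiniteProducts.of_preserves_binary_and_terminal L
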